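/- Let l ≥ 2 be an integer and let z : ℤ → ℂ satisfy z(k+1) = l·z(k) − z(k−1) for all k ∈ ℤ. Suppose that for some i ∈ ℤ we have z(i−1) ≠ 0 and Im(z(i)/z(i−1)) > 0. Then for every j ∈ ℤ: z(i+j−1) ≠ 0, Im(z(i+j)/z(i+j−1)) > 0, and z(i+j)/z(i+j−1) = (p·w + q)/(r·w + s), where w = z(i)/z(i−1) and [[p, q], [r, s]] is the j-th power α_l^j of the matrix α_l. -/

import Mathlib

lemma aux_im (a b c d : ℤ) (hdet : a * d - b * c = 1) (w : ℂ) (hw : 0 < w.im) :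
    ((c : ℂ) * w + d) ≠ 0 ∧ 0 < (((a : ℂ) * w + b) / ((c : ℂ) * w + d)).im := by
  have hne : ((c : ℂ) * w + d) ≠ 0 := by
    intro h
    have h1 : ((c : ℂ) * w + d).im = 0 := by rw [h]; simp
    have h2 : ((c : ℂ) * w + d).re = 0 := by rw [h]; simp
    simp [Complex.add_im, Complex.add_re, Complex.mul_im, Complex.mul_re] at h1 h2
    have hc : c = 0 := h1.resolve_right (ne_of_gt hw)
    rw [hc] at h2
    simp at h2
    rw [hc, h2] at hdet
    simp at hdet
  refine ⟨hne, ?_⟩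
  have hsq : 0 < Complex.normSq ((c : ℂ) * w + d) := Complex.normSq_pos.mpr hne
  have key : (((a : ℂ) * w + b) / ((c : ℂ) * w + d)).im
      = w.im / Complex.normSq ((c : ℂ) * w + d) := by
    rw [Complex.div_im]
    rw [div_sub_div_same]
    congr 1
    simp [Complex.add_im, Complex.add_re, Complex.mul_im, Complex.mul_re]
    have : (a : ℝ) * d - b * c = 1 := by exact_mod_cast hdet
    nlinarith [this]
  rw [key]
  exact div_pos hw hsq

lemma aux_rep (l : ℤ) (z : ℤ → ℂ)
    (hrec : ∀ k : ℤ, z (k + 1) = (l : ℂ) * z k - z (k - 1))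
    (i : ℤ) (α : Matrix.SpecialLinearGroup (Fin 2) ℤ)
    (hα : (α : Matrix (Fin 2) (Fin 2) ℤ) = !![l, -1; 1, 0]) :
    ∀ j : ℤ,
      z (i + j) = (((α ^ j : Matrix.SpecialLinearGroup (Fin 2) ℤ) :
            Matrix (Fin 2) (Fin 2) ℤ) 0 0 : ℂ) * z i
          + (((α ^ j : Matrix.SpecialLinearGroup (Fin 2) ℤ) :
            Matrix (Fin 2) (Fin 2) ℤ) 0 1 : ℂ) * z (i - 1)
        ∧ z (i + j - 1) = (((α ^ j : Matrix.SpecialLinearGroup (Fin 2) ℤ) :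
            Matrix (Fin 2) (Fin 2) ℤ) 1 0 : ℂ) * z i
          + (((α ^ j : Matrix.SpecialLinearGroup (Fin 2) ℤ) :
            Matrix (Fin 2) (Fin 2) ℤ) 1 1 : ℂ) * z (i - 1) := by
  intro j
  induction j using Int.induction_on with
  | zero => simp
  | succ n ih =>
    obtain ⟨ih1, ih2⟩ := ih
    have hsp : α ^ ((n : ℤ) + 1) = α * α ^ (n : ℤ) := by
      rw [add_comm, zpow_add, zpow_one]
    have e : ∀ q, (((α ^ ((n : ℤ) + 1) : Matrix.SpecialLinearGroup (Fin 2) ℤ) :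
          Matrix (Fin 2) (Fin 2) ℤ) 0 q
            = l * ((α ^ (n : ℤ) : Matrix.SpecialLinearGroup (Fin 2) ℤ) :
                Matrix (Fin 2) (Fin 2) ℤ) 0 q
              - ((α ^ (n : ℤ) : Matrix.SpecialLinearGroup (Fin 2) ℤ) :
                Matrix (Fin 2) (Fin 2) ℤ) 1 q)
        ∧ (((α ^ ((n : ℤ) + 1) : Matrix.SpecialLinearGroup (Fin 2) ℤ) :
          Matrix (Fin 2) (Fin 2) ℤ) 1 q
            = ((α ^ (n : ℤ) : Matrix.SpecialLinearGroup (Fin 2) ℤ) :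
                Matrix (Fin 2) (Fin 2) ℤ) 0 q) := by
      intro q
      rw [hsp]
      constructor <;>
        simp [Matrix.SpecialLinearGroup.coe_mul, Matrix.mul_apply, Fin.sum_univ_two, hα] <;>
        ring
    have a1 : i + ((n : ℤ) + 1) = (i + n) + 1 := by ring
    have a2 : i + ((n : ℤ) + 1) - 1 = i + n := by ring
    have a3 : (i + (n : ℤ)) + 1 - 1 = i + n := by ring
    refine ⟨?_, ?_⟩
    · rw [a1, hrec, (e 0).1, (e 1).1, ih1, ih2]
      push_cast
      ring
    · rw [a2, (e 0).2, (e 1).2, ih1]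
  | pred n ih =>
    obtain ⟨ih1, ih2⟩ := ih
    have hsn : α ^ (-(n : ℤ)) = α * α ^ (-(n : ℤ) - 1) := by
      rw [← zpow_one_add]
      congr 1
      ring
    have e : ∀ q, (((α ^ (-(n : ℤ)) : Matrix.SpecialLinearGroup (Fin 2) ℤ) :
          Matrix (Fin 2) (Fin 2) ℤ) 0 q
            = l * ((α ^ (-(n : ℤ) - 1) : Matrix.SpecialLinearGroup (Fin 2) ℤ) :
                Matrix (Fin 2) (Fin 2) ℤ) 0 q
              - ((α ^ (-(n : ℤ) - 1) : Matrix.SpecialLinearGroup (Fin 2) ℤ) :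
                Matrix (Fin 2) (Fin 2) ℤ) 1 q)
        ∧ (((α ^ (-(n : ℤ)) : Matrix.SpecialLinearGroup (Fin 2) ℤ) :
          Matrix (Fin 2) (Fin 2) ℤ) 1 q
            = ((α ^ (-(n : ℤ) - 1) : Matrix.SpecialLinearGroup (Fin 2) ℤ) :
                Matrix (Fin 2) (Fin 2) ℤ) 0 q) := by
      intro q
      rw [hsn]
      constructor <;>
        simp [Matrix.SpecialLinearGroup.coe_mul, Matrix.mul_apply, Fin.sum_univ_two, hα] <;>
        ring
    have a1 : i + (-(n : ℤ) - 1) = i + -(n : ℤ) - 1 := by ring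
    have a2 : i + -(n : ℤ) = (i + -(n : ℤ) - 1) + 1 := by ring
    have a3 : (i + -(n : ℤ) - 1) + 1 - 1 = i + -(n : ℤ) - 1 := by ring
    have hstep : z (i + -(n : ℤ)) = (l : ℂ) * z (i + -(n : ℤ) - 1)
        - z (i + (-(n : ℤ) - 1) - 1) := by
      rw [a2, hrec, a3]
      congr 2
      ring
    refine ⟨?_, ?_⟩
    · rw [a1, ih2, ← (e 0).2, ← (e 1).2]
    · have key : z (i + (-(n : ℤ) - 1) - 1)
          = (l : ℂ) * z (i + -(n : ℤ) - 1) - z (i + -(n : ℤ)) := by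
        rw [hstep]; ring
      have e2 : ∀ q, ((α ^ (-(n : ℤ) - 1) : Matrix.SpecialLinearGroup (Fin 2) ℤ) :
            Matrix (Fin 2) (Fin 2) ℤ) 1 q
          = l * ((α ^ (-(n : ℤ)) : Matrix.SpecialLinearGroup (Fin 2) ℤ) :
              Matrix (Fin 2) (Fin 2) ℤ) 1 q
            - ((α ^ (-(n : ℤ)) : Matrix.SpecialLinearGroup (Fin 2) ℤ) :
              Matrix (Fin 2) (Fin 2) ℤ) 0 q := by
        intro q
        have h1 := (e q).1
        rw [← (e q).2] at h1
        linarith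
      rw [key, ih1, ih2, e2 0, e2 1]
      push_cast
      ring

/-- Let `l ≥ 2` be an integer and `z : ℤ → ℂ` satisfy `z(k+1) = l·z(k) − z(k−1)`.
If `z(i−1) ≠ 0` and `Im(z(i)/z(i−1)) > 0`, then for every `j : ℤ` the quotient
`z(i+j)/z(i+j−1)` lies in the upper half-plane and equals the Möbius transform of
`w = z(i)/z(i−1)` by `α_l^j`, where `α_l = [[l, −1], [1, 0]] ∈ SL(2,ℤ)`. -/
theorem stmt_2 (l : ℤ) (hl : 2 ≤ l) (z : ℤ → ℂ)
    (hrec : ∀ k : ℤ, z (k + 1) = (l : ℂ) * z k - z (k - 1))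
    (i : ℤ) (h0 : z (i - 1) ≠ 0) (him : 0 < (z i / z (i - 1)).im)
    (α : Matrix.SpecialLinearGroup (Fin 2) ℤ)
    (hα : (α : Matrix (Fin 2) (Fin 2) ℤ) = !![l, -1; 1, 0]) (j : ℤ) :
    z (i + j - 1) ≠ 0 ∧ 0 < (z (i + j) / z (i + j - 1)).im ∧
      z (i + j) / z (i + j - 1) =
        ((((α ^ j : Matrix.SpecialLinearGroup (Fin 2) ℤ) :
              Matrix (Fin 2) (Fin 2) ℤ) 0 0 : ℂ) * (z i / z (i - 1)) +
            (((α ^ j : Matrix.SpecialLinearGroup (Fin 2) ℤ) :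
              Matrix (Fin 2) (Fin 2) ℤ) 0 1 : ℂ)) /
          ((((α ^ j : Matrix.SpecialLinearGroup (Fin 2) ℤ) :
              Matrix (Fin 2) (Fin 2) ℤ) 1 0 : ℂ) * (z i / z (i - 1)) +
            (((α ^ j : Matrix.SpecialLinearGroup (Fin 2) ℤ) :
              Matrix (Fin 2) (Fin 2) ℤ) 1 1 : ℂ)) := by
  obtain ⟨h1, h2⟩ := aux_rep l z hrec i α hα j
  set M := ((α ^ j : Matrix.SpecialLinearGroup (Fin 2) ℤ) :
    Matrix (Fin 2) (Fin 2) ℤ) with hM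
  set w := z i / z (i - 1) with hw
  have hdet : M 0 0 * M 1 1 - M 0 1 * M 1 0 = 1 := by
    have h := (α ^ j).prop
    rw [Matrix.det_fin_two] at h
    exact h
  obtain ⟨hne, him'⟩ := aux_im (M 0 0) (M 0 1) (M 1 0) (M 1 1) hdet w him
  have hzi : z i = w * z (i - 1) := (div_mul_cancel₀ _ h0).symm
  have hden : z (i + j - 1) = ((M 1 0 : ℂ) * w + M 1 1) * z (i - 1) := by
    rw [h2, hzi]; ring
  have hnum : z (i + j) = ((M 0 0 : ℂ) * w + M 0 1) * z (i - 1) := by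
    rw [h1, hzi]; ring
  have hdz : z (i + j - 1) ≠ 0 := by rw [hden]; exact mul_ne_zero hne h0
  have hq : z (i + j) / z (i + j - 1)
      = ((M 0 0 : ℂ) * w + M 0 1) / ((M 1 0 : ℂ) * w + M 1 1) := by
    rw [hnum, hden, mul_div_mul_right _ _ h0]
  exact ⟨hdz, by rw [hq]; exact him', hq⟩
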